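/- Let U, Δ ∈ ℝ with U < Δ < (3/2)U and r* ≥ 1 defined as above. The saddle value between E(r*+2) and E(r*+3), namely Γ3 := −3(3(r*+2)^2−(r*+2))U + 6(r*+2)^2Δ + 2(Δ−U) + Δ, satisfies Γ3 < Γ1 and Γ3 < Γ2, where Γ1, Γ2 are as in the barrier-comparison statement. -/

import Mathlib

/-- The saddle value `Γ3` between `E(r*+2)` and `E(r*+3)` is strictly smaller than
both barrier candidates `Γ1` and `Γ2`, with `r* = U/(2(3U-2Δ)) - 1/2 - δ ≥ 1`,
`δ ∈ (0,1)`, under `U < Δ < (3/2) U`. -/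
theorem gamma3_smallest (U Δ : ℝ) (h1 : U < Δ) (h2 : Δ < 3 / 2 * U)
    (rstar : ℤ) (δ : ℝ) (hδ0 : 0 < δ) (hδ1 : δ < 1)
    (hr : (rstar : ℝ) = U / (2 * (3 * U - 2 * Δ)) - 1 / 2 - δ) (hr1 : 1 ≤ rstar)
    (Γ1 Γ2 Γ3 : ℝ)
    (hΓ1 : Γ1 = -3 * (3 * (rstar : ℝ) ^ 2 - (rstar : ℝ)) * U + 6 * (rstar : ℝ) ^ 2 * Δ
      + 5 * (2 * (rstar : ℝ) + 1) * Δ - (15 * (rstar : ℝ) + 4) * U + Δ)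
    (hΓ2 : Γ2 = -3 * (3 * ((rstar : ℝ) + 1) ^ 2 - ((rstar : ℝ) + 1)) * U
      + 6 * ((rstar : ℝ) + 1) ^ 2 * Δ + (2 * (rstar : ℝ) + 3) * Δ
      - 3 * ((rstar : ℝ) + 1) * U + Δ)
    (hΓ3 : Γ3 = -3 * (3 * ((rstar : ℝ) + 2) ^ 2 - ((rstar : ℝ) + 2)) * U
      + 6 * ((rstar : ℝ) + 2) ^ 2 * Δ + 2 * (Δ - U) + Δ) :
    Γ3 < Γ1 ∧ Γ3 < Γ2 := by
  have hε : 0 < 3 * U - 2 * Δ := by linarith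
  have hne : 3 * U - 2 * Δ ≠ 0 := ne_of_gt hε
  have hU : U = (3 * U - 2 * Δ) * (2 * (rstar : ℝ) + 1 + 2 * δ) := by
    rw [eq_sub_iff_add_eq, eq_sub_iff_add_eq, eq_div_iff (mul_ne_zero two_ne_zero hne)] at hr
    linarith
  have key1 : Γ1 - Γ3 = 7 * ((3 * U - 2 * Δ) * (1 - δ)) := by
    rw [hΓ1, hΓ3]; linear_combination (-7/2) * hU
  have key2 : Γ2 - Γ3 = (6 - 5 * δ) * (3 * U - 2 * Δ) := by
    rw [hΓ2, hΓ3]; linear_combination (-5/2) * hU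
  have p1 : 0 < (3 * U - 2 * Δ) * (1 - δ) := mul_pos hε (by linarith)
  have p2 : 0 < (6 - 5 * δ) * (3 * U - 2 * Δ) := mul_pos (by linarith) hε
  constructor <;> linarith
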